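/- Let k be a field and G a group. If 0 → A → B → C → 0 is a short exact sequence of good k-linear representations of G, then the induced sequence of G-finite duals 0 → C^∨ → B^∨ → A^∨ → 0 is exact. In other words, the G-finite dual functor V ↦ V^∨ is exact on short exact sequences of good representations. -/

import Mathlib

/-!
Statement 3: the `G`-finite dual functor `V ↦ V^∨` is exact on short exact sequences of
good representations: if `0 → A → B → C → 0` is a short exact sequence of good `k`-linear
representations of `G`, then `0 → C^∨ → B^∨ → A^∨ → 0` is exact.
-/

noncomputable section

variable {k G : Type} [Field k] [Group G]

section Defs

variable {V W : Type} [AddCommGroup V] [Module k V] [AddCommGroup W] [Module k W]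

/-- A submodule is a subrepresentation if it is stable under the `G`-action. -/
def IsSubrep (ρ : Representation k G V) (p : Submodule k V) : Prop :=
  ∀ (g : G), ∀ v ∈ p, ρ g v ∈ p

/-- A vector is `G`-finite if it lies in some finite-dimensional subrepresentation. -/
def IsGFiniteVector (ρ : Representation k G V) (v : V) : Prop :=
  ∃ p : Submodule k V, IsSubrep ρ p ∧ FiniteDimensional k p ∧ v ∈ p

/-- The subrepresentation of `G`-finite vectors of a representation. -/
def gFiniteVectors (ρ : Representation k G V) : Submodule k V where
  carrier := {v | IsGFiniteVector ρ v}
  add_mem' := by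
    rintro a b ⟨p, hp, hfp, hap⟩ ⟨q, hq, hfq, hbq⟩
    haveI := hfp; haveI := hfq
    refine ⟨p ⊔ q, ?_, inferInstance, Submodule.add_mem_sup hap hbq⟩
    intro g v hv
    rcases Submodule.mem_sup.mp hv with ⟨x, hx, y, hy, rfl⟩
    rw [map_add]
    exact Submodule.add_mem_sup (hp g x hx) (hq g y hy)
  zero_mem' := by
    refine ⟨⊥, ?_, inferInstance, Submodule.zero_mem ⊥⟩
    intro g v hv
    rw [Submodule.mem_bot] at hv ⊢
    rw [hv, map_zero]
  smul_mem' := by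
    rintro c v ⟨p, hp, hfp, hvp⟩
    exact ⟨p, hp, hfp, p.smul_mem c hvp⟩

lemma gFiniteVectors_isSubrep (ρ : Representation k G V) :
    IsSubrep ρ (gFiniteVectors ρ) := by
  rintro g v ⟨p, hp, hfp, hvp⟩
  exact ⟨p, hp, hfp, hp g v hvp⟩

/-- The restriction of a representation to a subrepresentation. -/
def subRep (ρ : Representation k G V) (p : Submodule k V) (hp : IsSubrep ρ p) :
    Representation k G p where
  toFun g := (ρ g).restrict (fun v hv => hp g v hv)
  map_one' := by
    ext v
    simp [LinearMap.restrict_apply]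
  map_mul' g h := by
    ext v
    simp [LinearMap.restrict_apply]

/-- The representation induced on a quotient by a subrepresentation. -/
def quotRep (ρ : Representation k G V) (p : Submodule k V) (hp : IsSubrep ρ p) :
    Representation k G (V ⧸ p) where
  toFun g := Submodule.mapQ p p (ρ g) (fun v hv => hp g v hv)
  map_one' := by
    apply Submodule.linearMap_qext
    ext v
    simp [Submodule.mapQ_apply]
  map_mul' g h := by
    apply Submodule.linearMap_qext
    ext v
    simp [Submodule.mapQ_apply]

/-- A linear map is `G`-equivariant for representations `ρ`, `σ`. -/
def IsEquivariantMap (ρ : Representation k G V) (σ : Representation k G W)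
    (f : V →ₗ[k] W) : Prop :=
  ∀ (g : G) (v : V), f (ρ g v) = σ g (f v)

/-- Two representations are isomorphic if there is an equivariant linear equivalence. -/
def IsRepIso (ρ : Representation k G V) (σ : Representation k G W) : Prop :=
  ∃ e : V ≃ₗ[k] W, ∀ (g : G) (v : V), e (ρ g v) = σ g (e v)

/-- A representation is simple (irreducible) if it is nonzero and has no nontrivial
subrepresentations. -/
def IsSimpleRep (ρ : Representation k G V) : Prop :=
  Nontrivial V ∧ ∀ p : Submodule k V, IsSubrep ρ p → p = ⊥ ∨ p = ⊤

/-- A decomposition of a representation as an (internal) direct sum of simple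
subrepresentations. -/
structure SimpleDecomposition (ρ : Representation k G V) where
  ι : Type
  c : ι → Submodule k V
  isSubrep : ∀ i, IsSubrep ρ (c i)
  indep : iSupIndep c
  total : ⨆ i, c i = ⊤
  simple : ∀ i, IsSimpleRep (subRep ρ (c i) (isSubrep i))

/-- The multiplicity of a representation `σ` in a simple decomposition: the cardinality of
the set of summands isomorphic to `σ`. -/
def SimpleDecomposition.mult {ρ : Representation k G V} (D : SimpleDecomposition ρ)
    {S : Type} [AddCommGroup S] [Module k S] (σ : Representation k G S) : Cardinal :=
  Cardinal.mk {i : D.ι // IsRepIso (subRep ρ (D.c i) (D.isSubrep i)) σ}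

/-- A representation is good if it is semisimple, every simple subrepresentation is
finite-dimensional, and every isomorphism class of simple representations occurs with
finite multiplicity. -/
def IsGoodRep (ρ : Representation k G V) : Prop :=
  Nonempty (SimpleDecomposition ρ) ∧
  (∀ (p : Submodule k V) (hp : IsSubrep ρ p),
      IsSimpleRep (subRep ρ p hp) → FiniteDimensional k p) ∧
  (∀ (D : SimpleDecomposition ρ) (S : Type) [AddCommGroup S] [Module k S]
      (σ : Representation k G S), IsSimpleRep σ →
      {i : D.ι | IsRepIso (subRep ρ (D.c i) (D.isSubrep i)) σ}.Finite)

/-- The `G`-finite dual `V^∨` of a representation: the `G`-finite vectors of the full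
linear dual. -/
abbrev gFinDual (ρ : Representation k G V) : Submodule k (Module.Dual k V) :=
  gFiniteVectors ρ.dual

/-- The representation of `G` on the `G`-finite dual. -/
abbrev gFinDualRep (ρ : Representation k G V) : Representation k G (gFinDual ρ) :=
  subRep ρ.dual (gFinDual ρ) (gFiniteVectors_isSubrep ρ.dual)

lemma IsEquivariantMap.dualMap {ρ : Representation k G V} {σ : Representation k G W}
    {f : V →ₗ[k] W} (hf : IsEquivariantMap ρ σ f) :
    IsEquivariantMap σ.dual ρ.dual f.dualMap := by
  intro g φ
  ext v
  simp only [LinearMap.dualMap_apply, Representation.dual_apply, Module.Dual.transpose_apply,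
    LinearMap.comp_apply, LinearMap.coe_comp, Function.comp_apply]
  rw [hf]

lemma map_gFiniteVectors_le {ρ : Representation k G V} {σ : Representation k G W}
    {f : V →ₗ[k] W} (hf : IsEquivariantMap ρ σ f) :
    (gFiniteVectors ρ).map f ≤ gFiniteVectors σ := by
  rintro _ ⟨v, ⟨p, hp, hfp, hvp⟩, rfl⟩
  haveI := hfp
  refine ⟨p.map f, ?_, inferInstance, Submodule.mem_map_of_mem hvp⟩
  rintro g _ ⟨w, hw, rfl⟩
  rw [← hf]
  exact Submodule.mem_map_of_mem (hp g w hw)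

/-- The map induced on `G`-finite vectors by an equivariant map. -/
def gFiniteMap (ρ : Representation k G V) (σ : Representation k G W)
    (f : V →ₗ[k] W) (hf : IsEquivariantMap ρ σ f) :
    gFiniteVectors ρ →ₗ[k] gFiniteVectors σ :=
  f.restrict (fun v hv => map_gFiniteVectors_le hf (Submodule.mem_map_of_mem hv))

lemma gFiniteMap_isEquivariant (ρ : Representation k G V) (σ : Representation k G W)
    (f : V →ₗ[k] W) (hf : IsEquivariantMap ρ σ f) :
    IsEquivariantMap (subRep ρ _ (gFiniteVectors_isSubrep ρ))
      (subRep σ _ (gFiniteVectors_isSubrep σ)) (gFiniteMap ρ σ f hf) := by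
  intro g v
  apply Subtype.ext
  exact hf g v.1

/-- The map induced on `G`-finite duals by an equivariant map (the restricted transpose). -/
abbrev gFinDualMap (ρ : Representation k G V) (σ : Representation k G W)
    (f : V →ₗ[k] W) (hf : IsEquivariantMap ρ σ f) :
    gFinDual σ →ₗ[k] gFinDual ρ :=
  gFiniteMap σ.dual ρ.dual f.dualMap hf.dualMap

lemma gFinDualMap_isEquivariant (ρ : Representation k G V) (σ : Representation k G W)
    (f : V →ₗ[k] W) (hf : IsEquivariantMap ρ σ f) :
    IsEquivariantMap (V := gFinDual σ) (W := gFinDual ρ)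
      (gFinDualRep σ) (gFinDualRep ρ) (gFinDualMap ρ σ f hf) :=
  gFiniteMap_isEquivariant σ.dual ρ.dual f.dualMap hf.dualMap


lemma IsSubrep.sup' {ρ : Representation k G V} {p q : Submodule k V}
    (hp : IsSubrep ρ p) (hq : IsSubrep ρ q) : IsSubrep ρ (p ⊔ q) := by
  intro g v hv
  rcases Submodule.mem_sup.mp hv with ⟨x, hx, y, hy, rfl⟩
  rw [map_add]
  exact Submodule.add_mem_sup (hp g x hx) (hq g y hy)

/-- Every subrepresentation of a representation admitting a simple decomposition has a
`G`-stable complement. -/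
lemma exists_isCompl_of_simpleDecomposition {ρ : Representation k G V}
    (D : SimpleDecomposition ρ) {q : Submodule k V} (hq : IsSubrep ρ q) :
    ∃ W : Submodule k V, IsSubrep ρ W ∧ IsCompl q W := by
  set S : Set (Submodule k V) := {W | IsSubrep ρ W ∧ Disjoint q W} with hS
  obtain ⟨W, hW⟩ : ∃ W, Maximal (· ∈ S) W := by
    apply zorn_le₀
    intro c hc hchain
    rcases c.eq_empty_or_nonempty with rfl | hne
    · refine ⟨⊥, ⟨?_, disjoint_bot_right⟩, by simp⟩
      intro g v hv
      rw [Submodule.mem_bot] at hv ⊢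
      rw [hv, map_zero]
    · refine ⟨sSup c, ⟨?_, ?_⟩, fun z hz => le_sSup hz⟩
      · intro g v hv
        rcases (Submodule.mem_sSup_of_directed hne hchain.directedOn).mp hv with ⟨p, hpc, hvp⟩
        exact (Submodule.mem_sSup_of_directed hne hchain.directedOn).mpr
          ⟨p, hpc, (hc hpc).1 g v hvp⟩
      · rw [Submodule.disjoint_def]
        intro v hvq hvs
        rcases (Submodule.mem_sSup_of_directed hne hchain.directedOn).mp hvs with ⟨p, hpc, hvp⟩
        exact (Submodule.disjoint_def.mp (hc hpc).2) v hvq hvp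
  refine ⟨W, hW.1.1, ⟨hW.1.2, codisjoint_iff.mpr ?_⟩⟩
  rw [eq_top_iff, ← D.total]
  refine iSup_le fun i => ?_
  -- show `D.c i ≤ q ⊔ W`
  set r : Submodule k (D.c i) := Submodule.comap (D.c i).subtype (q ⊔ W) with hr
  have hrsub : IsSubrep (subRep ρ (D.c i) (D.isSubrep i)) r := by
    intro g v hv
    simp only [hr, Submodule.mem_comap, Submodule.coe_subtype] at hv ⊢
    exact (IsSubrep.sup' hq hW.1.1) g v hv
  rcases (D.simple i).2 r hrsub with hbot | htop
  · -- then `W ⊔ D.c i` contradicts maximality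
    exfalso
    have hdisj : Disjoint q (W ⊔ D.c i) := by
      rw [Submodule.disjoint_def]
      intro v hvq hvs
      rcases Submodule.mem_sup.mp hvs with ⟨w, hw, x, hx, rfl⟩
      have hxmem : x ∈ q ⊔ W := by
        have h1 : w + x - w ∈ q ⊔ W :=
          Submodule.sub_mem _ (Submodule.mem_sup_left hvq) (Submodule.mem_sup_right hw)
        simpa using h1
      have : (⟨x, hx⟩ : D.c i) ∈ r := hxmem
      rw [hbot, Submodule.mem_bot] at this
      have hx0 : x = 0 := congrArg Subtype.val this
      subst hx0
      rw [add_zero] at hvq ⊢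
      exact (Submodule.disjoint_def.mp hW.1.2) w hvq hw
    have hle : W ⊔ D.c i ≤ W := hW.2 ⟨IsSubrep.sup' hW.1.1 (D.isSubrep i), hdisj⟩ le_sup_left
    have hciW : D.c i ≤ W := le_trans le_sup_right hle
    haveI := (D.simple i).1
    obtain ⟨x, hx0⟩ := exists_ne (0 : D.c i)
    have : (x : V) ∈ q ⊔ W := Submodule.mem_sup_right (hciW x.2)
    have : x ∈ r := this
    rw [hbot, Submodule.mem_bot] at this
    exact hx0 this
  · intro v hv
    have : (⟨v, hv⟩ : D.c i) ∈ r := htop ▸ Submodule.mem_top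
    exact this

/-- If `0 → A → B → C → 0` is a short exact sequence of good
representations of `G`, then the induced sequence of `G`-finite duals
`0 → C^∨ → B^∨ → A^∨ → 0` is exact. -/
theorem gFinDual_exact
    {A B C : Type} [AddCommGroup A] [Module k A] [AddCommGroup B] [Module k B]
    [AddCommGroup C] [Module k C]
    (ρA : Representation k G A) (ρB : Representation k G B) (ρC : Representation k G C)
    (hgoodA : IsGoodRep ρA) (hgoodB : IsGoodRep ρB) (hgoodC : IsGoodRep ρC)
    (f : A →ₗ[k] B) (g : B →ₗ[k] C)
    (hf : IsEquivariantMap ρA ρB f) (hg : IsEquivariantMap ρB ρC g)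
    (hinj : Function.Injective f) (hexact : LinearMap.range f = LinearMap.ker g)
    (hsurj : Function.Surjective g) :
    Function.Injective (gFinDualMap ρB ρC g hg) ∧
      LinearMap.range (gFinDualMap ρB ρC g hg) = LinearMap.ker (gFinDualMap ρA ρB f hf) ∧
      Function.Surjective (gFinDualMap ρA ρB f hf) := by
  have hgdual_inj : Function.Injective (g.dualMap) := by
    intro x y hxy
    ext c
    obtain ⟨b, rfl⟩ := hsurj c
    exact congrFun (congrArg (fun (φ : B →ₗ[k] k) => (φ : B → k)) hxy) b
  refine ⟨?_, ?_, ?_⟩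
  · -- injectivity of `g^∨`
    intro x y hxy
    apply Subtype.ext
    apply hgdual_inj
    exact congrArg Subtype.val hxy
  · -- exactness in the middle
    apply le_antisymm
    · rintro _ ⟨ψ, rfl⟩
      apply LinearMap.mem_ker.mpr
      apply Subtype.ext
      show f.dualMap (g.dualMap ψ.1) = 0
      ext a
      have : g (f a) = 0 := by
        have h := LinearMap.mem_range_self f a
        rw [hexact, LinearMap.mem_ker] at h
        exact h
      simp [LinearMap.dualMap_apply, this]
    · rintro ⟨φ, hφ⟩ hker
      have hφf : f.dualMap φ = 0 := congrArg Subtype.val (LinearMap.mem_ker.mp hker)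
      -- `φ` vanishes on `ker g = range f`, so it descends to `ψ : C →ₗ k`
      have hle : LinearMap.ker g ≤ LinearMap.ker φ := by
        rw [← hexact]
        rintro _ ⟨a, rfl⟩
        have : φ (f a) = 0 := congrFun (congrArg (fun (χ : A →ₗ[k] k) => (χ : A → k)) hφf) a
        exact this
      set e := g.quotKerEquivOfSurjective hsurj with he
      set ψ : Module.Dual k C := ((LinearMap.ker g).liftQ φ hle).comp (e.symm : C →ₗ[k] B ⧸ LinearMap.ker g) with hψ
      have hψg : g.dualMap ψ = φ := by
        ext b
        have hb : e (Submodule.Quotient.mk b) = g b := rfl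
        simp only [LinearMap.dualMap_apply, hψ, LinearMap.comp_apply, LinearEquiv.coe_coe]
        rw [← hb, LinearEquiv.symm_apply_apply]
        simp [Submodule.liftQ_apply]
      -- `ψ` is `G`-finite
      obtain ⟨p, hp, hfp, hφp⟩ := hφ
      haveI := hfp
      have hψfin : ψ ∈ gFinDual ρC := by
        set P := Submodule.comap (g.dualMap) p with hP
        refine ⟨P, ?_, ?_, ?_⟩
        · intro g₀ χ hχ
          have := hg.dualMap g₀ χ
          simp only [hP, Submodule.mem_comap] at hχ ⊢
          rw [this]
          exact hp g₀ _ hχ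
        · have hres : Function.Injective
              ((g.dualMap).restrict (p := P) (q := p) (fun x hx => hx)) := by
            intro x y hxy
            have h : g.dualMap (x.1) = g.dualMap (y.1) := congrArg Subtype.val hxy
            exact Subtype.ext (hgdual_inj h)
          exact FiniteDimensional.of_injective (K := k) (V₂ := p)
            ((g.dualMap).restrict (p := P) (q := p) (fun x hx => hx)) hres
        · simp only [hP, Submodule.mem_comap, hψg]; exact hφp
      refine ⟨⟨ψ, hψfin⟩, ?_⟩
      apply Subtype.ext
      exact hψg
  · -- surjectivity of `f^∨`
    -- use semisimplicity of `B` to find a `G`-stable complement of `range f`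
    obtain ⟨D⟩ := hgoodB.1
    have hrange : IsSubrep ρB (LinearMap.range f) := by
      rintro g₀ _ ⟨a, rfl⟩
      exact ⟨ρA g₀ a, hf g₀ a⟩
    obtain ⟨Wc, hWc, hcompl⟩ := exists_isCompl_of_simpleDecomposition D hrange
    set proj := (LinearMap.range f).projectionOnto Wc hcompl with hproj
    set finv : LinearMap.range f →ₗ[k] A := (LinearEquiv.ofInjective f hinj).symm.toLinearMap with hfinv
    set π : B →ₗ[k] A := finv.comp proj with hπ
    have hπf : ∀ a : A, π (f a) = a := by
      intro a
      have h1 : proj (f a) = ⟨f a, LinearMap.mem_range_self f a⟩ :=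
        Submodule.projectionOnto_apply_left hcompl ⟨f a, LinearMap.mem_range_self f a⟩
      have h2 : (⟨f a, LinearMap.mem_range_self f a⟩ : LinearMap.range f)
          = LinearEquiv.ofInjective f hinj a := rfl
      simp only [hπ, LinearMap.comp_apply, h1, h2, hfinv, LinearEquiv.coe_coe,
        LinearEquiv.symm_apply_apply]
    have hπequiv : IsEquivariantMap ρB ρA π := by
      intro g₀ b
      -- decompose b = x + w with x ∈ range f, w ∈ Wc
      obtain ⟨x, hx, w, hw, rfl⟩ := Submodule.mem_sup.mp
        (by rw [codisjoint_iff.mp hcompl.2]; exact Submodule.mem_top :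
          b ∈ LinearMap.range f ⊔ Wc)
      obtain ⟨a, rfl⟩ := hx
      have hgw : ρB g₀ w ∈ Wc := hWc g₀ w hw
      have hd1 : π (f a + w) = a := by
        rw [map_add]
        have : π w = 0 := by
          simp [hπ, hproj, LinearMap.comp_apply, Submodule.projectionOnto_apply_right hcompl ⟨w, hw⟩]
        rw [this, add_zero, hπf]
      have hd2 : π (ρB g₀ (f a + w)) = ρA g₀ a := by
        have hb : ρB g₀ (f a + w) = f (ρA g₀ a) + ρB g₀ w := by
          rw [map_add, ← hf g₀ a]
        have h1 : π (f (ρA g₀ a)) = ρA g₀ a := hπf _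
        have h2 : π (ρB g₀ w) = 0 := by
          simp [hπ, hproj, LinearMap.comp_apply,
            Submodule.projectionOnto_apply_right hcompl ⟨ρB g₀ w, hgw⟩]
        rw [hb, map_add, h1, h2, add_zero]
      rw [hd2, hd1]
    -- now extend an arbitrary `G`-finite functional on `A` along `π`
    rintro ⟨φ, hφ⟩
    have hext : π.dualMap φ ∈ gFinDual ρB :=
      map_gFiniteVectors_le hπequiv.dualMap (Submodule.mem_map_of_mem hφ)
    refine ⟨⟨π.dualMap φ, hext⟩, ?_⟩
    apply Subtype.ext
    show f.dualMap (π.dualMap φ) = φ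
    ext a
    simp [LinearMap.dualMap_apply, hπf a]

end Defs

end
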